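/- arXiv:1201.0978 — 5 statements merged into one kernel-verified Lean document; each statement's English description precedes it below -/
import Mathlib

section
/- Let P ≤ Q be a subgroup of finite index, χ: Q → ℝ a nonzero character, and ψ = χ restricted to P. If a ℤQ-module A is finitely generated over the monoid ring ℤQ_χ, then A is finitely generated over the monoid ring ℤP_ψ. -/
def fgOver {Q : Type*} [Group Q] (M : Set Q) (A : Type*) [AddCommGroup A]
    [Module (MonoidAlgebra ℤ Q) A] : Prop :=
  ∃ S : Finset A, AddSubgroup.closure
    {x : A | ∃ s ∈ S, ∃ q ∈ M, x = (MonoidAlgebra.single q (1:ℤ) : MonoidAlgebra ℤ Q) • s} = ⊤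

open Classical in
noncomputable def vchi {Q : Type*} (χ : Q → ℝ) (lam : MonoidAlgebra ℤ Q) : WithTop ℝ :=
  if h : lam = 0 then ⊤
  else ((lam.coeff.support.inf' (Finsupp.support_nonempty_iff.mpr (mt MonoidAlgebra.coeff_eq_zero.mp h)) χ : ℝ) : WithTop ℝ)

theorem stmt4 {Q : Type*} [Group Q] (hQ : Group.FG Q)
    (P : Subgroup Q) [P.FiniteIndex]
    (A : Type*) [AddCommGroup A] [Module (MonoidAlgebra ℤ Q) A]
    [Module.Finite (MonoidAlgebra ℤ Q) A]
    (χ : Q → ℝ) (hhom : ∀ a b : Q, χ (a * b) = χ a + χ b) (hne : χ ≠ 0)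
    (hA : fgOver {q : Q | 0 ≤ χ q} A) :
    fgOver {q : Q | q ∈ P ∧ 0 ≤ χ q} A := by
  classical
  obtain ⟨S, hS⟩ := hA
  have hχ1 : χ 1 = 0 := by have := hhom 1 1; simp at this; linarith
  have hχinv : ∀ q : Q, χ q⁻¹ = -χ q := by
    intro q
    have := hhom q q⁻¹
    rw [mul_inv_cancel] at this
    linarith
  have hχpow : ∀ (q : Q) (k : ℕ), χ (q ^ k) = k * χ q := by
    intro q k
    induction k with
    | zero => simpa using hχ1
    | succ k ih => rw [pow_succ, hhom, ih]; push_cast; ring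
  -- get an element of positive character value
  obtain ⟨q0, hq0⟩ : ∃ q, 0 < χ q := by
    obtain ⟨q, hq⟩ := Function.ne_iff.mp hne
    simp only [Pi.zero_apply] at hq
    rcases lt_or_gt_of_ne hq with h | h
    · exact ⟨q⁻¹, by rw [hχinv]; linarith⟩
    · exact ⟨q, h⟩
  -- find u ∈ P with χ u > 0
  obtain ⟨u, huP, hχu⟩ : ∃ u : Q, u ∈ P ∧ 0 < χ u := by
    obtain ⟨i, j, hij, heq⟩ :=
      Finite.exists_ne_map_eq_of_infinite (fun n : ℕ => ((q0 ^ n : Q) : Q ⧸ P))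
    have key : ∀ i j : ℕ, i < j → ((q0 ^ i : Q) : Q ⧸ P) = ((q0 ^ j : Q) : Q ⧸ P) →
        ∃ u : Q, u ∈ P ∧ 0 < χ u := by
      intro i j hlt h
      have hmem : (q0 ^ i)⁻¹ * q0 ^ j ∈ P := QuotientGroup.eq.mp h
      have hsplit : q0 ^ j = q0 ^ i * q0 ^ (j - i) := by
        rw [← pow_add, Nat.add_sub_cancel' hlt.le]
      have heq2 : (q0 ^ i)⁻¹ * q0 ^ j = q0 ^ (j - i) := by
        rw [hsplit, inv_mul_cancel_left]
      refine ⟨q0 ^ (j - i), heq2 ▸ hmem, ?_⟩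
      rw [hχpow]
      have : (0 : ℝ) < (j - i : ℕ) := by
        have : 0 < j - i := Nat.sub_pos_of_lt hlt
        exact_mod_cast this
      positivity
    rcases Nat.lt_or_ge i j with h | h
    · exact key i j h heq
    · exact key j i (lt_of_le_of_ne h (Ne.symm hij)) heq.symm
  haveI : Fintype (Q ⧸ P) := Fintype.ofFinite _
  set rep : Q ⧸ P → Q := fun d => Quotient.out d with hrep
  have hrepmem : ∀ q : Q, q * rep ((q⁻¹ : Q) : Q ⧸ P) ∈ P := by
    intro q
    have h1 : ((rep ((q⁻¹ : Q) : Q ⧸ P) : Q) : Q ⧸ P) = ((q⁻¹ : Q) : Q ⧸ P) :=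
      QuotientGroup.out_eq' _
    have h2 : (rep ((q⁻¹ : Q) : Q ⧸ P))⁻¹ * q⁻¹ ∈ P := QuotientGroup.eq.mp h1
    have h3 : (q * rep ((q⁻¹ : Q) : Q ⧸ P))⁻¹ ∈ P := by
      simpa [mul_inv_rev] using h2
    exact (P.inv_mem_iff).mp h3
  -- choose n large enough
  obtain ⟨n, hn⟩ : ∃ n : ℕ, ∀ d : Q ⧸ P, 0 ≤ χ (rep d) + n * χ u := by
    have hNE : (Finset.univ : Finset (Q ⧸ P)).Nonempty := Finset.univ_nonempty
    set C := Finset.univ.sup' hNE (fun d : Q ⧸ P => -χ (rep d)) with hC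
    obtain ⟨n, hn⟩ := exists_nat_ge (C / χ u)
    refine ⟨n, fun d => ?_⟩
    have h1 : -χ (rep d) ≤ C := by
      rw [hC]; exact Finset.le_sup' (fun d : Q ⧸ P => -χ (rep d)) (Finset.mem_univ d)
    have h2 : C ≤ n * χ u := by
      rw [div_le_iff₀ hχu] at hn
      linarith
    linarith
  -- the new generating set
  refine ⟨Finset.image (fun ds : (Q ⧸ P) × A =>
    (MonoidAlgebra.single ((u ^ n)⁻¹ * (rep ds.1)⁻¹) (1:ℤ) : MonoidAlgebra ℤ Q) • ds.2)
    (Finset.univ ×ˢ S), ?_⟩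
  rw [eq_top_iff, ← hS]
  apply AddSubgroup.closure_mono
  rintro x ⟨s, hs, q, hq, rfl⟩
  refine ⟨(MonoidAlgebra.single ((u ^ n)⁻¹ * (rep ((q⁻¹ : Q) : Q ⧸ P))⁻¹) (1:ℤ) :
      MonoidAlgebra ℤ Q) • s,
    Finset.mem_image.mpr ⟨(((q⁻¹ : Q) : Q ⧸ P), s),
      Finset.mem_product.mpr ⟨Finset.mem_univ _, hs⟩, rfl⟩,
    q * rep ((q⁻¹ : Q) : Q ⧸ P) * u ^ n, ⟨?_, ?_⟩, ?_⟩
  · exact P.mul_mem (hrepmem q) (P.pow_mem huP n)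
  · have := hn ((q⁻¹ : Q) : Q ⧸ P)
    have hq' : (0:ℝ) ≤ χ q := hq
    rw [hhom, hhom, hχpow]
    linarith
  · rw [← mul_smul, MonoidAlgebra.single_mul_single, one_mul]
    congr 1
    group
end

section
/- Let Q be a finitely generated group, A a ℤQ-module generated by the finite set 𝒜, and χ: Q → ℝ a nonzero character. If A is finitely generated over the monoid ring ℤQ_χ, then for any r ≥ 0 there exists a matrix (λ_{a,a₁}) over ℤQ_χ with a₁ = Σ_{a ∈ 𝒜} a·λ_{a,a₁} for each a₁ ∈ 𝒜 and v_χ(λ_{a,a₁}) > r for all entries. -/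
theorem stmt12 {Q : Type*} [Group Q] (hQ : Group.FG Q)
    (A : Type*) [AddCommGroup A] [Module (MonoidAlgebra ℤ Q) A]
    (𝒜 : Finset A) (hgen : Submodule.span (MonoidAlgebra ℤ Q) (𝒜 : Set A) = ⊤)
    (χ : Q → ℝ) (hhom : ∀ a b : Q, χ (a * b) = χ a + χ b) (hne : χ ≠ 0)
    (hfg : fgOver {q : Q | 0 ≤ χ q} A) :
    ∀ r : ℝ, 0 ≤ r → ∃ lam : A → A → MonoidAlgebra ℤ Q,
      (∀ a ∈ 𝒜, ∀ a₁ ∈ 𝒜, ∀ q ∈ (lam a a₁).coeff.support, 0 ≤ χ q) ∧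
      (∀ a₁ ∈ 𝒜, a₁ = ∑ a ∈ 𝒜, lam a a₁ • a) ∧
      (∀ a ∈ 𝒜, ∀ a₁ ∈ 𝒜, (r : WithTop ℝ) < vchi χ (lam a a₁)) := by
  classical
  intro r hr
  obtain ⟨S, hS⟩ := hfg
  have hχ1 : χ 1 = 0 := by have := hhom 1 1; simp at this; linarith
  have hχinv : ∀ q : Q, χ q⁻¹ = -χ q := by
    intro q
    have := hhom q q⁻¹
    rw [mul_inv_cancel, hχ1] at this
    linarith
  -- there exist elements of arbitrarily large χ-value
  have hbig : ∀ M : ℝ, ∃ t : Q, M < χ t := by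
    have hpos : ∃ q : Q, 0 < χ q := by
      by_contra h
      push_neg at h
      apply hne
      funext q
      have h1 := h q
      have h2 := h q⁻¹
      rw [hχinv] at h2
      simp only [Pi.zero_apply]
      linarith
    obtain ⟨q₁, hq₁⟩ := hpos
    intro M
    have hpow : ∀ n : ℕ, χ (q₁ ^ n) = n * χ q₁ := by
      intro n
      induction n with
      | zero => simpa using hχ1
      | succ n ih => rw [pow_succ, hhom, ih]; push_cast; ring
    refine ⟨q₁ ^ (⌈M / χ q₁⌉₊ + 1), ?_⟩
    rw [hpow]
    have h1 : M / χ q₁ < ((⌈M / χ q₁⌉₊ + 1 : ℕ) : ℝ) := by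
      push_cast
      have := Nat.le_ceil (M / χ q₁)
      linarith
    calc M = (M / χ q₁) * χ q₁ := by field_simp
    _ < ((⌈M / χ q₁⌉₊ + 1 : ℕ) : ℝ) * χ q₁ := by
        exact mul_lt_mul_of_pos_right h1 hq₁
  -- decomposition of any element over the positive monoid ring
  have hdecomp : ∀ x : A, ∃ σ : A → MonoidAlgebra ℤ Q,
      (∀ s : A, ∀ q ∈ (σ s).coeff.support, 0 ≤ χ q) ∧ x = ∑ s ∈ S, σ s • s := by
    intro x
    have hx : x ∈ AddSubgroup.closure
        {x : A | ∃ s ∈ S, ∃ q ∈ {q : Q | 0 ≤ χ q},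
          x = (MonoidAlgebra.single q (1:ℤ) : MonoidAlgebra ℤ Q) • s} := by
      rw [hS]; trivial
    refine AddSubgroup.closure_induction ?_ ?_ ?_ ?_ hx
    · rintro y ⟨s₀, hs₀, q, hq, rfl⟩
      refine ⟨fun s => if s = s₀ then MonoidAlgebra.single q (1:ℤ) else 0, ?_, ?_⟩
      · intro s p hp
        by_cases h : s = s₀
        · have hp' : p ∈ (MonoidAlgebra.single q (1:ℤ) : MonoidAlgebra ℤ Q).coeff.support := by
            simpa [h] using hp
          rw [MonoidAlgebra.coeff_single, Finsupp.support_single_ne_zero q one_ne_zero, Finset.mem_singleton] at hp'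
          subst hp'
          exact hq
        · simp [h] at hp
      · rw [Finset.sum_eq_single_of_mem s₀ hs₀]
        · simp
        · intro b _ hbne
          simp [hbne]
    · exact ⟨0, by simp, by simp⟩
    · rintro x y _ _ ⟨σ₁, h1, hx1⟩ ⟨σ₂, h2, hx2⟩
      refine ⟨σ₁ + σ₂, ?_, ?_⟩
      · intro s p hp
        simp only [Pi.add_apply, MonoidAlgebra.coeff_add] at hp
        have := Finsupp.support_add hp
        rw [Finset.mem_union] at this
        rcases this with h | h
        · exact h1 s p h
        · exact h2 s p h
      · rw [hx1, hx2, ← Finset.sum_add_distrib]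
        exact Finset.sum_congr rfl fun s _ => by simp [add_smul]
    · rintro x _ ⟨σ, h, hx1⟩
      refine ⟨-σ, ?_, ?_⟩
      · intro s p hp
        rw [Pi.neg_apply, MonoidAlgebra.coeff_neg, Finsupp.support_neg] at hp
        exact h s p hp
      · rw [hx1, ← Finset.sum_neg_distrib]
        exact Finset.sum_congr rfl fun s _ => by simp
  -- express each generator of S over 𝒜
  have hν : ∀ s : A, ∃ ν : A → MonoidAlgebra ℤ Q, ∑ a ∈ 𝒜, ν a • a = s := by
    intro s
    have : s ∈ Submodule.span (MonoidAlgebra ℤ Q) (𝒜 : Set A) := by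
      rw [hgen]; trivial
    obtain ⟨f, -, hf⟩ := Submodule.mem_span_finset.mp this
    exact ⟨f, hf⟩
  choose ν hν using hν
  -- uniform lower bound on χ over supports of the ν's
  set C : ℕ := S.sup fun s => 𝒜.sup fun a => (ν s a).coeff.support.sup fun q => ⌈-χ q⌉₊ with hCdef
  have hC : ∀ s ∈ S, ∀ a ∈ 𝒜, ∀ q ∈ (ν s a).coeff.support, -(C : ℝ) ≤ χ q := by
    intro s hs a ha q hq
    have h1 : ⌈-χ q⌉₊ ≤ C := by
      calc ⌈-χ q⌉₊ ≤ ((ν s a).coeff.support.sup fun q => ⌈-χ q⌉₊) :=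
            Finset.le_sup (f := fun q => ⌈-χ q⌉₊) hq
      _ ≤ (𝒜.sup fun a => (ν s a).coeff.support.sup fun q => ⌈-χ q⌉₊) :=
            Finset.le_sup (f := fun a => (ν s a).coeff.support.sup fun q => ⌈-χ q⌉₊) ha
      _ ≤ C :=
            Finset.le_sup (f := fun s => 𝒜.sup fun a => (ν s a).coeff.support.sup fun q => ⌈-χ q⌉₊) hs
    have h2 : -χ q ≤ (⌈-χ q⌉₊ : ℝ) := Nat.le_ceil _
    have h3 : ((⌈-χ q⌉₊ : ℕ) : ℝ) ≤ (C : ℝ) := Nat.cast_le.mpr h1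
    linarith
  obtain ⟨t, ht⟩ := hbig (r + C)
  -- the key columnwise construction
  have key : ∀ a₁ : A, ∃ col : A → MonoidAlgebra ℤ Q,
      (∀ a ∈ 𝒜, ∀ q ∈ (col a).coeff.support, r < χ q) ∧ a₁ = ∑ a ∈ 𝒜, col a • a := by
    intro a₁
    obtain ⟨σ, hσsupp, hσ⟩ :=
      hdecomp ((MonoidAlgebra.single t⁻¹ (1:ℤ) : MonoidAlgebra ℤ Q) • a₁)
    refine ⟨fun a => ∑ s ∈ S,
      (MonoidAlgebra.single t (1:ℤ) : MonoidAlgebra ℤ Q) * σ s * ν s a, ?_, ?_⟩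
    · intro a ha q hq
      have hex : ∃ s ∈ S, q ∈
          ((MonoidAlgebra.single t (1:ℤ) : MonoidAlgebra ℤ Q) * σ s * ν s a).coeff.support := by
        by_contra h
        push_neg at h
        have hz : (∑ s ∈ S,
            (MonoidAlgebra.single t (1:ℤ) : MonoidAlgebra ℤ Q) * σ s * ν s a).coeff q = 0 := by
          rw [MonoidAlgebra.coeff_sum, Finset.sum_apply']
          exact Finset.sum_eq_zero fun s hs => Finsupp.notMem_support_iff.mp (h s hs)
        exact Finsupp.mem_support_iff.mp hq hz
      obtain ⟨s, hs, hq'⟩ := hex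
      have h1 := MonoidAlgebra.support_coeff_mul_subset
        ((MonoidAlgebra.single t (1:ℤ) : MonoidAlgebra ℤ Q) * σ s) (ν s a) hq'
      rw [Finset.mem_mul] at h1
      obtain ⟨q₁, hq₁, q₂, hq₂, rfl⟩ := h1
      have h2 := MonoidAlgebra.support_coeff_mul_subset
        (MonoidAlgebra.single t (1:ℤ) : MonoidAlgebra ℤ Q) (σ s) hq₁
      rw [Finset.mem_mul] at h2
      obtain ⟨p₁, hp₁, p₂, hp₂, rfl⟩ := h2
      have hp₁' : p₁ = t := by
        have : (MonoidAlgebra.single t (1:ℤ) : MonoidAlgebra ℤ Q).coeff.support = {t} :=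
          Finsupp.support_single_ne_zero t one_ne_zero
        rw [this, Finset.mem_singleton] at hp₁
        exact hp₁
      subst hp₁'
      have hb1 : 0 ≤ χ p₂ := hσsupp s p₂ hp₂
      have hb2 : -(C : ℝ) ≤ χ q₂ := hC s hs a ha q₂ hq₂
      rw [hhom, hhom]
      linarith
    · have ha₁ : a₁ = (MonoidAlgebra.single t (1:ℤ) : MonoidAlgebra ℤ Q) •
          ((MonoidAlgebra.single t⁻¹ (1:ℤ) : MonoidAlgebra ℤ Q) • a₁) := by
        rw [smul_smul, MonoidAlgebra.single_mul_single, mul_inv_cancel, mul_one]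
        rw [← MonoidAlgebra.one_def, one_smul]
      rw [ha₁, hσ, Finset.smul_sum]
      have step1 : ∀ s ∈ S, (MonoidAlgebra.single t (1:ℤ) : MonoidAlgebra ℤ Q) • (σ s • s)
          = ∑ a ∈ 𝒜, ((MonoidAlgebra.single t (1:ℤ) : MonoidAlgebra ℤ Q) * σ s * ν s a) • a := by
        intro s _
        calc (MonoidAlgebra.single t (1:ℤ) : MonoidAlgebra ℤ Q) • (σ s • s)
            = ((MonoidAlgebra.single t (1:ℤ) : MonoidAlgebra ℤ Q) * σ s) •
              (∑ a ∈ 𝒜, ν s a • a) := by rw [smul_smul, hν s]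
        _ = ∑ a ∈ 𝒜, ((MonoidAlgebra.single t (1:ℤ) : MonoidAlgebra ℤ Q) * σ s * ν s a) • a := by
            rw [Finset.smul_sum]
            exact Finset.sum_congr rfl fun a _ => by rw [smul_smul]
      rw [Finset.sum_congr rfl step1, Finset.sum_comm]
      exact Finset.sum_congr rfl fun a _ => (Finset.sum_smul).symm
  choose col hcol1 hcol2 using key
  refine ⟨fun a a₁ => col a₁ a, ?_, ?_, ?_⟩
  · intro a ha a₁ _ q hq
    exact le_of_lt (lt_of_le_of_lt hr (hcol1 a₁ a ha q hq))
  · intro a₁ _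
    exact hcol2 a₁
  · intro a ha a₁ _
    unfold vchi
    split_ifs with h
    · exact WithTop.coe_lt_top r
    · rw [WithTop.coe_lt_coe, Finset.lt_inf'_iff]
      intro q hq
      exact hcol1 a₁ a ha q hq
end

section
/- For a finitely generated group Q and a finitely generated ℤQ-module A, the invariant Σ⁰(Q; A) = {[χ] ∈ S(Q) | A is finitely generated over ℤQ_χ} is an open subset of the character sphere S(Q). -/
section Aux

variable {Q : Type*} [Group Q] {A : Type*} [AddCommGroup A] [Module (MonoidAlgebra ℤ Q) A]

/-- left multiplication by `single q 1` as a `ℤ`-linear map -/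
noncomputable def smL (q : Q) : A →ₗ[ℤ] A :=
  (DistribMulAction.toAddMonoidHom A ((MonoidAlgebra.single q (1:ℤ)) : MonoidAlgebra ℤ Q)).toIntLinearMap

lemma smL_apply (q : Q) (x : A) :
    smL q x = (MonoidAlgebra.single q (1:ℤ) : MonoidAlgebra ℤ Q) • x := rfl

lemma smL_single (q p : Q) (s : A) :
    smL q ((MonoidAlgebra.single p (1:ℤ) : MonoidAlgebra ℤ Q) • s)
      = (MonoidAlgebra.single (q * p) (1:ℤ) : MonoidAlgebra ℤ Q) • s := by
  rw [smL_apply, ← mul_smul, MonoidAlgebra.single_mul_single, one_mul]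

lemma closure_eq_top_iff_span (s : Set A) :
    AddSubgroup.closure s = ⊤ ↔ Submodule.span ℤ s = ⊤ := by
  rw [← Submodule.span_int_eq_addSubgroupClosure]
  constructor
  · intro h
    rw [Submodule.eq_top_iff']
    intro x
    have : x ∈ (Submodule.span ℤ s).toAddSubgroup := h ▸ AddSubgroup.mem_top x
    exact this
  · intro h; rw [h]; rfl

lemma decomp {Y : Set Q} (hY : Subgroup.closure Y = ⊤) (q : Q) :
    q = 1 ∨ ∃ q' y, y ∈ Y ∪ Y⁻¹ ∧ q = q' * y := by
  have hq : q ∈ Submonoid.closure (Y ∪ Y⁻¹) := by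
    rw [← Subgroup.closure_toSubmonoid, hY]
    exact Subgroup.mem_top q
  refine Submonoid.closure_induction (motive := fun x _ => x = 1 ∨ ∃ q' y, y ∈ Y ∪ Y⁻¹ ∧ x = q' * y)
    ?_ (Or.inl rfl) ?_ hq
  · intro x hx
    exact Or.inr ⟨1, x, hx, (one_mul x).symm⟩
  · rintro a b _ _ ha (rfl | ⟨q', y, hy, rfl⟩)
    · simpa [mul_one] using ha
    · exact Or.inr ⟨a * q', y, hy, (mul_assoc a q' y).symm⟩

lemma addchar {χ : Q → ℝ} (h : ∀ a b, χ (a * b) = χ a + χ b) :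
    χ 1 = 0 ∧ (∀ q, χ q⁻¹ = -χ q) ∧ ∀ t (k : ℕ), χ (t ^ k) = k * χ t := by
  have h1 : χ 1 = 0 := by have h11 := h 1 1; rw [mul_one] at h11; linarith
  refine ⟨h1, fun q => by have := h q⁻¹ q; rw [inv_mul_cancel, h1] at this; linarith, ?_⟩
  intro t k
  induction k with
  | zero => simpa using h1
  | succ n ih => rw [pow_succ, h, ih]; push_cast; ring

lemma extract (S₀ : Finset A) (χ : Q → ℝ) (m : ℝ) (x : A)
    (hx : x ∈ Submodule.span ℤ {x : A | ∃ s ∈ S₀, ∃ p, m ≤ χ p ∧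
      x = (MonoidAlgebra.single p (1:ℤ) : MonoidAlgebra ℤ Q) • s}) :
    ∃ G : Finset Q, (∀ p ∈ G, m ≤ χ p) ∧ x ∈ Submodule.span ℤ
      {x : A | ∃ s ∈ S₀, ∃ p ∈ G, x = (MonoidAlgebra.single p (1:ℤ) : MonoidAlgebra ℤ Q) • s} := by
  classical
  obtain ⟨T, hTsub, hxT⟩ := Submodule.mem_span_finite_of_mem_span hx
  have h : ∀ t ∈ (T : Set A), ∃ p : Q, m ≤ χ p ∧ ∃ s ∈ S₀,
      t = (MonoidAlgebra.single p (1:ℤ) : MonoidAlgebra ℤ Q) • s := by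
    intro t ht
    obtain ⟨s, hs, p, hp, rfl⟩ := hTsub ht
    exact ⟨p, hp, s, hs, rfl⟩
  choose! f hf1 hf2 using h
  refine ⟨T.image f, ?_, ?_⟩
  · intro p hp
    obtain ⟨t, ht, rfl⟩ := Finset.mem_image.mp hp
    exact hf1 t ht
  · refine Submodule.span_le.2 (fun t ht => Submodule.subset_span ?_) hxT
    obtain ⟨s, hs, hts⟩ := hf2 t ht
    exact ⟨s, hs, f t, Finset.mem_image_of_mem f ht, hts⟩

end Aux

theorem stmt13 {Q : Type*} [Group Q] (hQ : Group.FG Q)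
    (A : Type*) [AddCommGroup A] [Module (MonoidAlgebra ℤ Q) A]
    [Module.Finite (MonoidAlgebra ℤ Q) A] :
    IsOpen {χ : {f : Q → ℝ // (∀ a b : Q, f (a * b) = f a + f b) ∧ f ≠ 0} |
      fgOver {q : Q | 0 ≤ χ.1 q} A} := by
  classical
  rw [isOpen_iff_mem_nhds]
  rintro ⟨χ₀, hadd, hne⟩ hmem
  obtain ⟨S₀, hS₀⟩ := hmem
  rw [closure_eq_top_iff_span] at hS₀
  obtain ⟨h1₀, hinv₀, hpow₀⟩ := addchar hadd
  -- an element of positive value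
  have hexT : ∃ t : Q, 0 < χ₀ t := by
    by_contra hcon
    push_neg at hcon
    apply hne
    funext q
    have h1 := hcon q
    have h2 := hcon q⁻¹
    rw [hinv₀] at h2
    have : χ₀ q = 0 := le_antisymm h1 (by linarith)
    simpa using this
  obtain ⟨t, ht⟩ := hexT
  -- the margin lemma
  have margin : ∀ (m : ℝ) (a : A), a ∈ Submodule.span ℤ {x : A | ∃ s ∈ S₀, ∃ p, m ≤ χ₀ p ∧
      x = (MonoidAlgebra.single p (1:ℤ) : MonoidAlgebra ℤ Q) • s} := by
    intro m a
    obtain ⟨k, hk⟩ := exists_nat_ge (m / χ₀ t)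
    have hkm : m ≤ (k : ℝ) * χ₀ t := by
      rw [← div_le_iff₀ ht] at *
      exact hk
    have h1 : (MonoidAlgebra.single (t ^ k)⁻¹ (1:ℤ) : MonoidAlgebra ℤ Q) • a ∈
        Submodule.span ℤ {x : A | ∃ s ∈ S₀, ∃ q ∈ {q : Q | 0 ≤ χ₀ q},
          x = (MonoidAlgebra.single q (1:ℤ) : MonoidAlgebra ℤ Q) • s} := by
      rw [hS₀]; trivial
    have h2 := Submodule.apply_mem_span_image_of_mem_span (smL (t ^ k)) h1
    have h3 : smL (t ^ k) ((MonoidAlgebra.single (t ^ k)⁻¹ (1:ℤ) : MonoidAlgebra ℤ Q) • a) = a := by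
      rw [smL_apply, ← mul_smul, MonoidAlgebra.single_mul_single, mul_inv_cancel, one_mul]
      rw [← MonoidAlgebra.one_def, one_smul]
    rw [h3] at h2
    refine Submodule.span_le.2 ?_ h2
    rintro _ ⟨_, ⟨s, hs, p, hp, rfl⟩, rfl⟩
    refine Submodule.subset_span ⟨s, hs, t ^ k * p, ?_, smL_single _ _ _⟩
    have : χ₀ (t ^ k * p) = χ₀ (t ^ k) + χ₀ p := hadd _ _
    rw [this, hpow₀]
    have hp0 : (0:ℝ) ≤ χ₀ p := hp
    linarith
  -- generators of Q
  obtain ⟨Y, hY, hYfin⟩ := Group.fg_iff.mp hQ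
  set Yb : Finset Q := hYfin.toFinset ∪ hYfin.toFinset.image (·⁻¹) with hYb
  have hYbmem : ∀ y, y ∈ Y ∪ Y⁻¹ → y ∈ Yb := by
    intro y hy
    rcases hy with hy | hy
    · exact Finset.mem_union_left _ (hYfin.mem_toFinset.mpr hy)
    · refine Finset.mem_union_right _ (Finset.mem_image.mpr ⟨y⁻¹, ?_, inv_inv y⟩)
      exact hYfin.mem_toFinset.mpr hy
  -- bound on generators
  obtain ⟨c, hc⟩ := (Yb.image χ₀).bddAbove
  have hcY : ∀ y ∈ Yb, χ₀ y ≤ c := fun y hy => hc (Finset.mem_coe.mpr (Finset.mem_image_of_mem χ₀ hy))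
  set m : ℝ := c + 3 with hm
  -- finite supports for rewriting rules
  choose Gf hGf1 hGf2 using fun (y : Q) (s : A) =>
    extract S₀ χ₀ m _ (margin m ((MonoidAlgebra.single y (1:ℤ) : MonoidAlgebra ℤ Q) • s))
  set G : Finset Q := (Yb ×ˢ S₀).biUnion (fun ys => Gf ys.1 ys.2) with hG
  -- the neighborhood
  set U : Set {f : Q → ℝ // (∀ a b : Q, f (a * b) = f a + f b) ∧ f ≠ 0} :=
    {χ | (∀ y ∈ Yb, χ.1 y < c + 1) ∧ ∀ p ∈ G, m - 1 < χ.1 p} with hU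
  have hUopen : IsOpen U := by
    have hrw : U = (⋂ y ∈ Yb, {χ : {f : Q → ℝ // (∀ a b : Q, f (a * b) = f a + f b) ∧ f ≠ 0} |
        χ.1 y < c + 1}) ∩ ⋂ p ∈ G, {χ | m - 1 < χ.1 p} := by
      ext χ
      simp [hU, Set.mem_iInter]
    rw [hrw]
    refine IsOpen.inter (isOpen_biInter_finset fun y _ => ?_) (isOpen_biInter_finset fun p _ => ?_)
    · exact isOpen_lt ((continuous_apply y).comp continuous_subtype_val) continuous_const
    · exact isOpen_lt continuous_const ((continuous_apply p).comp continuous_subtype_val)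
  have hUmem : (⟨χ₀, hadd, hne⟩ : {f : Q → ℝ // (∀ a b : Q, f (a * b) = f a + f b) ∧ f ≠ 0}) ∈ U := by
    refine ⟨fun y hy => lt_of_le_of_lt (hcY y hy) (by linarith), fun p hp => ?_⟩
    obtain ⟨ys, hys, hpys⟩ := Finset.mem_biUnion.mp hp
    have := hGf1 ys.1 ys.2 p hpys
    linarith
  refine Filter.mem_of_superset (hUopen.mem_nhds hUmem) ?_
  rintro ⟨χ, haddχ, hneχ⟩ ⟨hU1, hU2⟩
  obtain ⟨h1χ, hinvχ, hpowχ⟩ := addchar haddχ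
  refine ⟨S₀, (closure_eq_top_iff_span _).mpr ?_⟩
  set Mspan := Submodule.span ℤ {x : A | ∃ s ∈ S₀, ∃ q ∈ {q : Q | 0 ≤ χ q},
    x = (MonoidAlgebra.single q (1:ℤ) : MonoidAlgebra ℤ Q) • s} with hMspan
  have KEY : ∀ n : ℕ, ∀ q : Q, -(n : ℝ) ≤ χ q → ∀ s ∈ S₀,
      (MonoidAlgebra.single q (1:ℤ) : MonoidAlgebra ℤ Q) • s ∈ Mspan := by
    intro n
    induction n with
    | zero =>
      intro q hq s hs
      exact Submodule.subset_span ⟨s, hs, q, by simpa using hq, rfl⟩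
    | succ n ih =>
      intro q hq s hs
      by_cases h0 : 0 ≤ χ q
      · exact Submodule.subset_span ⟨s, hs, q, h0, rfl⟩
      push_neg at h0
      rcases decomp hY q with rfl | ⟨q', y, hy, rfl⟩
      · rw [h1χ] at h0; linarith
      have hyY : y ∈ Yb := hYbmem y hy
      have h2 : (MonoidAlgebra.single y (1:ℤ) : MonoidAlgebra ℤ Q) • s ∈
          Submodule.span ℤ {x : A | ∃ s' ∈ S₀, ∃ p ∈ G,
            x = (MonoidAlgebra.single p (1:ℤ) : MonoidAlgebra ℤ Q) • s'} := by
        refine Submodule.span_mono ?_ (hGf2 y s)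
        rintro _ ⟨s', hs', p, hp, rfl⟩
        exact ⟨s', hs', p, Finset.mem_biUnion.mpr ⟨(y, s), Finset.mk_mem_product hyY hs, hp⟩, rfl⟩
      have h3 := Submodule.apply_mem_span_image_of_mem_span (smL q') h2
      rw [← smL_single]
      refine Submodule.span_le.2 ?_ h3
      rintro _ ⟨_, ⟨s', hs', p, hp, rfl⟩, rfl⟩
      rw [smL_single]
      refine ih (q' * p) ?_ s' hs'
      have e1 : χ (q' * y) = χ q' + χ y := haddχ q' y
      have e2 : χ (q' * p) = χ q' + χ p := haddχ q' p
      have hyb : χ y < c + 1 := hU1 y hyY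
      have hpb : m - 1 < χ p := hU2 p hp
      push_cast at hq ⊢
      rw [hm] at hpb
      linarith
  rw [eq_top_iff, ← hS₀]
  refine Submodule.span_le.2 ?_
  rintro _ ⟨s, hs, p, _, rfl⟩
  obtain ⟨n, hn⟩ := exists_nat_ge (-χ p)
  exact KEY n p (by linarith) s hs
end

section
/- Let Q be a group whose derived subgroup Q' is finitely generated, χ: Q → ℝ a nonzero character, and A a finitely generated ℤQ-module. Then A is finitely generated over the monoid ring ℤQ_χ if and only if A is finitely generated over the monoid ring ℤM of some finitely generated submonoid M ⊆ Q_χ. -/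
open Pointwise
open scoped commutatorElement

section Aux
variable {Q : Type*} [Group Q] {A : Type*} [AddCommGroup A] [Module (MonoidAlgebra ℤ Q) A]

private noncomputable def sg (q : Q) : MonoidAlgebra ℤ Q := MonoidAlgebra.single q (1 : ℤ)

private lemma sg_smul_sg (q q' : Q) (a : A) : sg q • sg q' • a = sg (q * q') • a := by
  rw [smul_smul, sg, sg, sg, MonoidAlgebra.single_mul_single, one_mul]

private lemma sg_one_smul (a : A) : sg (1 : Q) • a = a := by
  rw [sg, ← MonoidAlgebra.one_def, one_smul]

private def dset (M : Set Q) (S : Finset A) : Set A :=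
  {x : A | ∃ s ∈ S, ∃ q ∈ M, x = (MonoidAlgebra.single q (1:ℤ) : MonoidAlgebra ℤ Q) • s}

private lemma mem_dset {M : Set Q} {S : Finset A} {s : A} (hs : s ∈ S) {q : Q} (hq : q ∈ M) :
    sg q • s ∈ dset M S := ⟨s, hs, q, hq, rfl⟩

private lemma dset_mono {M M' : Set Q} (h : M ⊆ M') (S : Finset A) : dset M S ⊆ dset M' S := by
  rintro x ⟨s, hs, q, hq, rfl⟩
  exact ⟨s, hs, q, h hq, rfl⟩

private lemma extract_s14 (M : Set Q) (S : Finset A) (a : A)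
    (ha : a ∈ AddSubgroup.closure (dset M S)) :
    ∃ F : Finset Q, ↑F ⊆ M ∧ a ∈ AddSubgroup.closure (dset (F : Set Q) S) := by
  classical
  induction ha using AddSubgroup.closure_induction with
  | mem x hx =>
    obtain ⟨s, hs, q, hq, rfl⟩ := hx
    exact ⟨{q}, by simpa using hq,
      AddSubgroup.subset_closure ⟨s, hs, q, by simp, rfl⟩⟩
  | zero => exact ⟨∅, by simp, zero_mem _⟩
  | add x y hx hy ihx ihy =>
    obtain ⟨F₁, hF₁, hx'⟩ := ihx
    obtain ⟨F₂, hF₂, hy'⟩ := ihy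
    refine ⟨F₁ ∪ F₂, by simp [hF₁, hF₂, Set.union_subset], add_mem ?_ ?_⟩
    · exact AddSubgroup.closure_mono (dset_mono (by simp [Set.subset_def]; tauto) S) hx'
    · exact AddSubgroup.closure_mono (dset_mono (by simp [Set.subset_def]; tauto) S) hy'
  | neg x hx ihx =>
    obtain ⟨F, hF, hx'⟩ := ihx
    exact ⟨F, hF, neg_mem hx'⟩

end Aux

theorem stmt14 {Q : Type*} [Group Q] (hQ : Group.FG Q)
    (hQ' : Group.FG (commutator Q))
    (A : Type*) [AddCommGroup A] [Module (MonoidAlgebra ℤ Q) A]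
    [Module.Finite (MonoidAlgebra ℤ Q) A]
    (χ : Q → ℝ) (hhom : ∀ a b : Q, χ (a * b) = χ a + χ b) (hne : χ ≠ 0) :
    fgOver {q : Q | 0 ≤ χ q} A ↔
      ∃ T : Finset Q, (T : Set Q) ⊆ {q : Q | 0 ≤ χ q} ∧
        fgOver ((Submonoid.closure (T : Set Q) : Submonoid Q) : Set Q) A := by
  classical
  have hχ1 : χ 1 = 0 := by have h := hhom 1 1; rw [one_mul] at h; linarith
  -- χ as a monoid hom to Multiplicative ℝ
  set φ : Q →* Multiplicative ℝ :=
    MonoidHom.mk' (fun q => Multiplicative.ofAdd (χ q)) (fun a b => by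
      show Multiplicative.ofAdd (χ (a * b)) = _; rw [hhom a b]; exact ofAdd_add _ _) with hφ
  have hχcomm : ∀ c ∈ commutator Q, χ c = 0 := by
    intro c hc
    have := Abelianization.commutator_subset_ker φ hc
    rw [MonoidHom.mem_ker] at this
    simpa [hφ] using congrArg Multiplicative.toAdd this
  constructor
  · rintro ⟨S, hS⟩
    -- generators of Q
    obtain ⟨X0, hX0⟩ : ∃ X : Finset Q, Subgroup.closure (X : Set Q) = ⊤ := hQ.out
    obtain ⟨C, hC⟩ : ∃ C : Finset Q, Subgroup.closure (C : Set Q) = commutator Q :=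
      (Group.fg_iff_subgroup_fg (commutator Q)).mp hQ'
    set X : Finset Q := X0 ∪ X0⁻¹ with hXdef
    -- extract finite data for each pair (x, s)
    have hext : ∀ p : Q × A, p.1 ∈ X → p.2 ∈ S →
        ∃ F : Finset Q, (F : Set Q) ⊆ {q : Q | 0 ≤ χ q} ∧
          sg p.1 • p.2 ∈ AddSubgroup.closure (dset (F : Set Q) S) := by
      intro p _ _
      refine extract_s14 _ S _ ?_
      have hds : dset {q : Q | 0 ≤ χ q} S = {x : A | ∃ s ∈ S, ∃ q ∈ {q : Q | 0 ≤ χ q},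
          x = (MonoidAlgebra.single q (1:ℤ) : MonoidAlgebra ℤ Q) • s} := rfl
      rw [hds, hS]; trivial
    choose! F hFsub hFmem using hext
    set T : Finset Q := (X ×ˢ S).biUnion (fun p => F p) ∪ C ∪ C⁻¹ with hTdef
    have hTsub : (T : Set Q) ⊆ {q : Q | 0 ≤ χ q} := by
      intro q hq
      simp only [hTdef, Finset.coe_union, Set.mem_union, Finset.coe_biUnion,
        Set.mem_iUnion, Finset.mem_coe, Finset.coe_inv, Set.mem_inv] at hq
      rcases hq with (⟨p, hp, hqF⟩ | hqC) | hqCinv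
      · rw [Finset.mem_product] at hp
        exact hFsub p hp.1 hp.2 hqF
      · have : χ q = 0 := hχcomm q (hC ▸ Subgroup.subset_closure hqC)
        simp [Set.mem_setOf_eq, this]
      · have hmem : q⁻¹ ∈ commutator Q := hC ▸ Subgroup.subset_closure hqCinv
        have : χ q = 0 := by
          have h1 := hχcomm _ ((commutator Q).inv_mem hmem)
          simpa using h1
        simp [Set.mem_setOf_eq, this]
    set M : Submonoid Q := Submonoid.closure (T : Set Q) with hMdef
    set N : AddSubgroup A := AddSubgroup.closure (dset (M : Set Q) S) with hNdef
    -- monoid elements act on N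
    have hMN : ∀ m ∈ M, ∀ a ∈ N, sg m • a ∈ N := by
      intro m hm a ha
      induction ha using AddSubgroup.closure_induction with
      | mem x hx =>
        obtain ⟨s, hs, q, hq, rfl⟩ := hx
        rw [show (MonoidAlgebra.single q (1:ℤ) : MonoidAlgebra ℤ Q) = sg q from rfl,
          sg_smul_sg]
        exact AddSubgroup.subset_closure (mem_dset hs (mul_mem hm hq))
      | zero => simpa using zero_mem N
      | add x y hx hy ihx ihy => rw [smul_add]; exact add_mem ihx ihy
      | neg x hx ihx => rw [smul_neg]; exact neg_mem ihx
    -- elements of commutator subgroup are in M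
    have hcommM : ∀ c ∈ commutator Q, c ∈ M := by
      intro c hc
      have h1 : c ∈ (Subgroup.closure (C : Set Q)).toSubmonoid := by
        rw [hC]; exact hc
      rw [Subgroup.closure_toSubmonoid] at h1
      refine Submonoid.closure_mono ?_ h1
      intro y hy
      rcases hy with hy | hy
      · simp only [hTdef, Finset.coe_union]
        exact Or.inl (Or.inr hy)
      · simp only [hTdef, Finset.coe_union]
        refine Or.inr ?_
        simpa using hy
    -- generators of Q act on N
    have hXN : ∀ x ∈ X, ∀ a ∈ N, sg x • a ∈ N := by
      intro x hx a ha
      induction ha using AddSubgroup.closure_induction with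
      | mem y hy =>
        obtain ⟨s, hs, m, hm, rfl⟩ := hy
        rw [show (MonoidAlgebra.single m (1:ℤ) : MonoidAlgebra ℤ Q) = sg m from rfl,
          sg_smul_sg]
        -- x * m = m * c * x with c = m⁻¹ * x * m * x⁻¹ ∈ commutator Q
        set c : Q := m⁻¹ * x * m * x⁻¹ with hcdef
        have hxm : x * m = m * c * x := by
          rw [hcdef]; group
        have hcM : c ∈ M := by
          refine hcommM c ?_
          have : c = ⁅m⁻¹, x⁆ := by rw [hcdef, commutatorElement_def]; group
          rw [this, commutator_eq_closure]
          exact Subgroup.subset_closure ⟨m⁻¹, x, rfl⟩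
        have hxs : sg x • s ∈ N := by
          have := hFmem (x, s) hx hs
          refine AddSubgroup.closure_mono (dset_mono ?_ S) this
          intro q hq
          refine Submonoid.subset_closure ?_
          simp only [hTdef, Finset.coe_union]
          exact Or.inl (Or.inl (by
            simp only [Finset.coe_biUnion, Set.mem_iUnion, Finset.mem_coe]
            exact ⟨(x, s), Finset.mem_product.mpr ⟨hx, hs⟩, hq⟩))
        rw [hxm, show m * c * x = (m * c) * x from rfl, ← sg_smul_sg]
        exact hMN (m * c) (mul_mem hm hcM) _ hxs
      | zero => simpa using zero_mem N
      | add y z hy hz ihy ihz => rw [smul_add]; exact add_mem ihy ihz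
      | neg y hy ihy => rw [smul_neg]; exact neg_mem ihy
    -- all of Q acts on N
    have hQN : ∀ q : Q, ∀ a ∈ N, sg q • a ∈ N := by
      intro q
      have hq : q ∈ Subgroup.closure (X0 : Set Q) := by rw [hX0]; trivial
      have key : (∀ a ∈ N, sg q • a ∈ N) ∧ (∀ a ∈ N, sg q⁻¹ • a ∈ N) := by
        induction hq using Subgroup.closure_induction with
        | mem x hxmem =>
          constructor
          · exact hXN x (by simp only [hXdef, Finset.mem_union]; exact Or.inl hxmem)
          · refine hXN x⁻¹ ?_
            simp only [hXdef, Finset.mem_union, Finset.mem_inv]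
            exact Or.inr (by simpa using hxmem)
        | one =>
          constructor <;> intro a ha <;> simpa [sg_one_smul] using ha
        | mul y z hy hz ihy ihz =>
          constructor
          · intro a ha
            rw [← sg_smul_sg]
            exact ihy.1 _ (ihz.1 _ ha)
          · intro a ha
            rw [mul_inv_rev, ← sg_smul_sg]
            exact ihz.2 _ (ihy.2 _ ha)
        | inv y hy ihy =>
          exact ⟨ihy.2, by simpa using ihy.1⟩
      exact key.1
    refine ⟨T, hTsub, S, ?_⟩
    rw [eq_top_iff, ← hS]
    rw [AddSubgroup.closure_le]
    rintro x ⟨s, hs, q, _, rfl⟩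
    have hsN : s ∈ N := by
      have : sg (1 : Q) • s ∈ N := AddSubgroup.subset_closure (mem_dset hs (one_mem M))
      simpa [sg_one_smul] using this
    exact hQN q s hsN
  · rintro ⟨T, hTsub, S, hS⟩
    refine ⟨S, ?_⟩
    rw [eq_top_iff, ← hS, AddSubgroup.closure_le]
    rintro x ⟨s, hs, q, hq, rfl⟩
    have hqχ : 0 ≤ χ q := by
      have : (Submonoid.closure (T : Set Q) : Set Q) ⊆ {q : Q | 0 ≤ χ q} := by
        have hQχ : ∃ P : Submonoid Q, (P : Set Q) = {q : Q | 0 ≤ χ q} := by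
          refine ⟨{ carrier := {q : Q | 0 ≤ χ q},
                    one_mem' := by simp [Set.mem_setOf_eq, hχ1],
                    mul_mem' := fun {a b} ha hb => by
                      simp only [Set.mem_setOf_eq] at *
                      rw [hhom]; positivity }, rfl⟩
        obtain ⟨P, hP⟩ := hQχ
        rw [← hP]
        exact Submonoid.closure_le.mpr (hP ▸ hTsub)
      exact this hq
    exact AddSubgroup.subset_closure ⟨s, hs, q, hqχ, rfl⟩
end

section
/- Let 𝓕 be a finite collection of finite subsets L of the lattice ℤⁿ ⊂ ℝⁿ such that for every unit vector u ∈ S^{n-1} there exists L ∈ 𝓕 with ⟨u, x⟩ > 0 for all x ∈ L. Then there exists a natural number p₀ such that for every lattice point x with ⟨x, x⟩ = p + 1 > p₀, there exists L ∈ 𝓕 with x + L contained in the ball B_p = {y ∈ ℤⁿ | ‖y‖² ≤ p}. -/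
theorem stmt19 (n : ℕ) (𝓕 : Finset (Finset (Fin n → ℤ)))
    (hcov : ∀ u : Fin n → ℝ, (∑ i, u i ^ 2) = 1 →
      ∃ L ∈ 𝓕, ∀ x ∈ L, 0 < ∑ i, u i * (x i : ℝ)) :
    ∃ p₀ : ℕ, ∀ p : ℕ, ∀ x : Fin n → ℤ,
      (∑ i, x i ^ 2) = (p : ℤ) + 1 → p + 1 > p₀ →
      ∃ L ∈ 𝓕, ∀ y ∈ L, (∑ i, (x i + y i) ^ 2) ≤ (p : ℤ) := by
  -- trivial case n = 0
  rcases Nat.eq_zero_or_pos n with hn | hn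
  · subst hn
    refine ⟨0, fun p x hx _ => absurd hx ?_⟩
    simp
    omega
  -- trivial case ∅ ∈ 𝓕
  by_cases hemp : ∅ ∈ 𝓕
  · exact ⟨0, fun p x _ _ => ⟨∅, hemp, by simp⟩⟩
  have hLne : ∀ L ∈ 𝓕, L.Nonempty := fun L hL =>
    Finset.nonempty_iff_ne_empty.mpr (fun h => hemp (h ▸ hL))
  -- a unit vector
  set i0 : Fin n := ⟨0, hn⟩
  set u₁ : Fin n → ℝ := Pi.single i0 1 with hu₁def
  have hu₁ : (∑ i, u₁ i ^ 2) = 1 := by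
    simp [hu₁def, Pi.single_apply]
  have h𝓕 : 𝓕.Nonempty := by
    obtain ⟨L, hL, -⟩ := hcov u₁ hu₁
    exact ⟨L, hL⟩
  have h𝓕a : 𝓕.attach.Nonempty := Finset.attach_nonempty_iff.mpr h𝓕
  -- the min-max function
  set g : (Fin n → ℝ) → ℝ := fun u =>
    𝓕.attach.sup' h𝓕a (fun L => L.1.inf' (hLne L.1 L.2) (fun y => ∑ i, u i * (y i : ℝ)))
    with hgdef
  have hgcont : Continuous g := by
    rw [hgdef]
    apply Continuous.finset_sup'_apply h𝓕a
    intro L _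
    apply Continuous.finset_inf'_apply (hLne L.1 L.2)
    intro y _
    exact continuous_finset_sum _ fun i _ => (continuous_apply i).mul continuous_const
  -- the sphere
  set S : Set (Fin n → ℝ) := {u | (∑ i, u i ^ 2) = 1} with hSdef
  have hgpos : ∀ u ∈ S, 0 < g u := by
    intro u hu
    obtain ⟨L, hL, hpos⟩ := hcov u hu
    have h1 : 0 < L.inf' (hLne L hL) (fun y => ∑ i, u i * (y i : ℝ)) :=
      (Finset.lt_inf'_iff _).mpr (fun y hy => hpos y hy)
    exact lt_of_lt_of_le h1 (Finset.le_sup'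
      (f := fun L : {L // L ∈ 𝓕} => L.1.inf' (hLne L.1 L.2) fun y => ∑ i, u i * (y i : ℝ))
      (Finset.mem_attach 𝓕 ⟨L, hL⟩))
  have hSclosed : IsClosed S := by
    have : S = (fun u : Fin n → ℝ => ∑ i, u i ^ 2) ⁻¹' {1} := rfl
    rw [this]
    exact IsClosed.preimage (continuous_finset_sum _ fun i _ =>
      (continuous_apply i).pow 2) isClosed_singleton
  have hSbdd : Bornology.IsBounded S := by
    apply Bornology.IsBounded.subset (Metric.isBounded_closedBall (x := (0 : Fin n → ℝ)) (r := 1))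
    intro u hu
    simp only [Metric.mem_closedBall, dist_zero_right]
    rw [pi_norm_le_iff_of_nonneg zero_le_one]
    intro i
    rw [Real.norm_eq_abs, ← sq_le_one_iff_abs_le_one]
    have := Finset.single_le_sum (f := fun i => u i ^ 2) (fun j _ => sq_nonneg (u j))
      (Finset.mem_univ i)
    calc u i ^ 2 ≤ ∑ j, u j ^ 2 := this
    _ = 1 := hu
  have hScomp : IsCompact S := Metric.isCompact_of_isClosed_isBounded hSclosed hSbdd
  have hSne : S.Nonempty := ⟨u₁, hu₁⟩
  obtain ⟨u₀, hu₀S, hu₀min⟩ := hScomp.exists_isMinOn hSne hgcont.continuousOn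
  set ε : ℝ := g u₀ with hεdef
  have hε : 0 < ε := hgpos u₀ hu₀S
  -- bound on the sizes of elements of L's
  set B : ℕ := 𝓕.sup (fun L => L.sup (fun y => (∑ i, y i ^ 2).toNat)) with hBdef
  have hB : ∀ L ∈ 𝓕, ∀ y ∈ L, (∑ i, y i ^ 2) ≤ (B : ℤ) := by
    intro L hL y hy
    have h1 : (∑ i, y i ^ 2).toNat ≤ B :=
      le_trans (Finset.le_sup (f := fun y : Fin n → ℤ => (∑ i, y i ^ 2).toNat) hy)
        (Finset.le_sup (f := fun L : Finset (Fin n → ℤ) => L.sup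
          (fun y => (∑ i, y i ^ 2).toNat)) hL)
    have h2 : (0 : ℤ) ≤ ∑ i, y i ^ 2 := Finset.sum_nonneg fun i _ => sq_nonneg _
    rw [← Int.toNat_of_nonneg h2]
    exact_mod_cast h1
  refine ⟨⌈(((B : ℝ) + 1) / (2 * ε)) ^ 2⌉₊, ?_⟩
  intro p x hx hp
  -- setup
  have hxR : (∑ i, (x i : ℝ) ^ 2) = (p : ℝ) + 1 := by exact_mod_cast congrArg (Int.cast : ℤ → ℝ) hx
  set r : ℝ := Real.sqrt ((p : ℝ) + 1) with hrdef
  have hp1pos : (0 : ℝ) < (p : ℝ) + 1 := by positivity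
  have hr2 : r ^ 2 = (p : ℝ) + 1 := Real.sq_sqrt hp1pos.le
  have hrpos : 0 < r := Real.sqrt_pos.mpr hp1pos
  set u : Fin n → ℝ := fun i => -(x i : ℝ) / r with hudef
  have huS : u ∈ S := by
    show (∑ i, u i ^ 2) = 1
    have : ∀ i, u i ^ 2 = (x i : ℝ) ^ 2 / r ^ 2 := by
      intro i; rw [hudef]; field_simp
    rw [Finset.sum_congr rfl fun i _ => this i, ← Finset.sum_div, hxR, hr2,
      div_self hp1pos.ne']
  -- choose L achieving the sup
  have hεle : ε ≤ g u := hu₀min huS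
  rw [hgdef] at hεle
  obtain ⟨⟨L, hL⟩, -, hLε⟩ := (Finset.le_sup'_iff _).mp hεle
  refine ⟨L, hL, ?_⟩
  intro y hy
  have hyε : ε ≤ ∑ i, u i * (y i : ℝ) := le_trans hLε (Finset.inf'_le _ hy)
  -- ⟨x, y⟩ ≤ -ε * r
  have hxy : (∑ i, (x i : ℝ) * (y i : ℝ)) ≤ -(ε * r) := by
    have h1 : (∑ i, u i * (y i : ℝ)) = (∑ i, -((x i : ℝ) * (y i : ℝ))) / r := by
      rw [Finset.sum_div]
      exact Finset.sum_congr rfl fun i _ => by rw [hudef]; ring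
    have h2 : (∑ i, -((x i : ℝ) * (y i : ℝ))) = -(∑ i, (x i : ℝ) * (y i : ℝ)) := by
      simp
    rw [h1, h2, le_div_iff₀ hrpos] at hyε
    linarith
  -- 2 ε r ≥ B + 1
  have hrB : (B : ℝ) + 1 ≤ 2 * ε * r := by
    have hc : (((B : ℝ) + 1) / (2 * ε)) ^ 2 < (p : ℝ) + 1 := by
      calc (((B : ℝ) + 1) / (2 * ε)) ^ 2 ≤ (⌈(((B : ℝ) + 1) / (2 * ε)) ^ 2⌉₊ : ℝ) :=
        Nat.le_ceil _
      _ < (p : ℝ) + 1 := by exact_mod_cast hp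
    have hc2 : ((B : ℝ) + 1) / (2 * ε) ≤ r := by
      rw [hrdef]
      calc ((B : ℝ) + 1) / (2 * ε) = Real.sqrt ((((B : ℝ) + 1) / (2 * ε)) ^ 2) := by
            rw [Real.sqrt_sq (by positivity)]
      _ ≤ Real.sqrt ((p : ℝ) + 1) := Real.sqrt_le_sqrt hc.le
    calc (B : ℝ) + 1 = (((B : ℝ) + 1) / (2 * ε)) * (2 * ε) := by field_simp
    _ ≤ r * (2 * ε) := by
        apply mul_le_mul_of_nonneg_right hc2 (by positivity)
    _ = 2 * ε * r := by ring
  -- final computation in ℝ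
  have hyB : (∑ i, (y i : ℝ) ^ 2) ≤ (B : ℝ) := by
    have := hB L hL y hy
    exact_mod_cast this
  have key : (∑ i, ((x i : ℝ) + (y i : ℝ)) ^ 2) ≤ (p : ℝ) := by
    have expand : (∑ i, ((x i : ℝ) + (y i : ℝ)) ^ 2) =
        (∑ i, (x i : ℝ) ^ 2) + 2 * (∑ i, (x i : ℝ) * (y i : ℝ)) + (∑ i, (y i : ℝ) ^ 2) := by
      rw [Finset.mul_sum, ← Finset.sum_add_distrib, ← Finset.sum_add_distrib]
      exact Finset.sum_congr rfl fun i _ => by ring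
    rw [expand, hxR]
    nlinarith [hε, hrpos]
  have final : ((∑ i, (x i + y i) ^ 2 : ℤ) : ℝ) ≤ (p : ℝ) := by
    push_cast
    exact key
  exact_mod_cast final
end
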